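/- Let A = (Q, Σ, δ, s, F) be a DFA recognizing language L, with A_min its minimal DFA, and suppose width^D(L) = ent(A_min) (the entanglement characterization). If there exist a nonempty string γ and 2p pairwise distinct states u₁, …, u_{2p} of A_min with δ(u_i, γ) = u_i for all i ∈ [2p], then width^D(L) ≥ p. -/

import Mathlib

/-- Co-lexicographic order on finite strings: lexicographic order on reverses. -/
def ColexList {Sig : Type*} [LinearOrder Sig] (a b : List Sig) : Prop :=
  List.Lex (· < ·) a.reverse b.reverse

/-- Reflexive co-lexicographic order. -/
def ColexLe {Sig : Type*} [LinearOrder Sig] (a b : List Sig) : Prop :=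
  a = b ∨ ColexList a b

/-- A finite or left-infinite string, represented by its sequence of characters read
from the right end (`none` signals that the string is exhausted). -/
def CStr (Sig : Type*) := ℕ → Option Sig

/-- The representation of a finite string as a `CStr`. -/
def toCStr {Sig : Type*} (a : List Sig) : CStr Sig := fun i => a.reverse[i]?

/-- The left-infinite string `γ^ω = ⋯γγγ` (for nonempty `γ`) as a `CStr`. -/
def omegaCStr {Sig : Type*} (γ : List Sig) : CStr Sig :=
  fun i => γ.reverse[i % γ.length]?

/-- Strict co-lexicographic order on finite or left-infinite strings: reading from the
right, at the first position where the two strings differ, either the first string is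
exhausted or its character is smaller. -/
def cstrLt {Sig : Type*} [LinearOrder Sig] (s t : CStr Sig) : Prop :=
  ∃ j, (∀ i, i < j → s i = t i) ∧
    ((s j = none ∧ t j ≠ none) ∨ ∃ a b, s j = some a ∧ t j = some b ∧ a < b)

/-- Non-strict co-lexicographic order on finite or left-infinite strings. -/
def cstrLe {Sig : Type*} [LinearOrder Sig] (s t : CStr Sig) : Prop :=
  s = t ∨ cstrLt s t

/-- `w` is a co-lexicographic lower bound of the set `A` of finite strings. -/
def IsColexLB {Sig : Type*} [LinearOrder Sig] (w : CStr Sig) (A : Set (List Sig)) : Prop :=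
  ∀ a ∈ A, cstrLe w (toCStr a)

/-- `w` is a co-lexicographic upper bound of the set `A` of finite strings. -/
def IsColexUB {Sig : Type*} [LinearOrder Sig] (w : CStr Sig) (A : Set (List Sig)) : Prop :=
  ∀ a ∈ A, cstrLe (toCStr a) w

/-- `w` is the co-lexicographic infimum of the set `A` of finite strings. -/
def IsColexInf {Sig : Type*} [LinearOrder Sig] (w : CStr Sig) (A : Set (List Sig)) : Prop :=
  IsColexLB w A ∧ ∀ w', IsColexLB w' A → cstrLe w' w

/-- `w` is the co-lexicographic supremum of the set `A` of finite strings. -/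
def IsColexSup {Sig : Type*} [LinearOrder Sig] (w : CStr Sig) (A : Set (List Sig)) : Prop :=
  IsColexUB w A ∧ ∀ w', IsColexUB w' A → cstrLe w w'

/-- The extension of a (total) DFA transition function to strings. -/
def deltaStar {Q Sig : Type*} (δ : Q → Sig → Q) (q : Q) (a : List Sig) : Q :=
  a.foldl δ q

/-- `Ireach δ s u` is the set `I_u` of strings leading from the source `s` to `u`. -/
def Ireach {Q Sig : Type*} (δ : Q → Sig → Q) (s u : Q) : Set (List Sig) :=
  {a | deltaStar δ s a = u}

/-- Membership of a finite string in the open co-lex interval `(lo, hi)`. -/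
def inOpenInterval {Sig : Type*} [LinearOrder Sig] (lo hi : CStr Sig) (a : List Sig) : Prop :=
  cstrLt lo (toCStr a) ∧ cstrLt (toCStr a) hi

/-- A set `S` of states is entangled: there is a co-lexicographically monotone sequence
of strings hitting every state of `S` infinitely often. -/
def Entangled {Q Sig : Type*} [LinearOrder Sig] (δ : Q → Sig → Q) (s : Q) (S : Set Q) : Prop :=
  ∃ a : ℕ → List Sig,
    ((∀ t t', t ≤ t' → ColexLe (a t) (a t')) ∨ (∀ t t', t ≤ t' → ColexLe (a t') (a t))) ∧
    ∀ u ∈ S, ∀ t, ∃ t', t ≤ t' ∧ deltaStar δ s (a t') = u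

/-- The string `γ^k`. -/
def gpow {Sig : Type*} (γ : List Sig) (k : ℕ) : List Sig := (List.replicate k γ).flatten

section AuxLemmas

variable {Q : Type*} {Sig : Type*}

lemma gpow_add (γ : List Sig) (a b : ℕ) : gpow γ (a + b) = gpow γ a ++ gpow γ b := by
  show (List.replicate (a + b) γ).flatten = _
  rw [List.replicate_add, List.flatten_append]; rfl

lemma length_gpow (γ : List Sig) (k : ℕ) : (gpow γ k).length = k * γ.length := by
  simp [gpow, mul_comm]

lemma deltaStar_append (δ : Q → Sig → Q) (q : Q) (x y : List Sig) :
    deltaStar δ q (x ++ y) = deltaStar δ (deltaStar δ q x) y :=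
  List.foldl_append ..

lemma deltaStar_gpow (δ : Q → Sig → Q) (q : Q) (γ : List Sig)
    (h : deltaStar δ q γ = q) (k : ℕ) : deltaStar δ q (gpow γ k) = q := by
  induction k with
  | zero => rfl
  | succ k ih =>
    rw [gpow_add γ k 1, deltaStar_append, ih]
    have h1 : gpow γ 1 = γ := by simp [gpow]
    rw [h1]; exact h

variable [LinearOrder Sig]

lemma omega_some (γ : List Sig) (hγ : γ ≠ []) (j : ℕ) : ∃ c, omegaCStr γ j = some c := by
  have h : j % γ.length < γ.reverse.length := by
    simpa using Nat.mod_lt _ (List.length_pos_iff.mpr hγ)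
  exact ⟨_, List.getElem?_eq_getElem h⟩

lemma get?_reverse_gpow (γ : List Sig) (k i : ℕ) (h : i < k * γ.length) :
    (gpow γ k).reverse[i]? = omegaCStr γ i := by
  induction k with
  | zero => simp at h
  | succ k ih =>
    have hsplit : gpow γ (k + 1) = γ ++ gpow γ k := by
      rw [show k + 1 = 1 + k by omega, gpow_add]; simp [gpow]
    rw [hsplit, List.reverse_append]
    by_cases hi : i < k * γ.length
    · rw [List.getElem?_append_left (by rw [List.length_reverse, length_gpow]; exact hi)]
      exact ih hi
    · have hkk : (k + 1) * γ.length = k * γ.length + γ.length := by ring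
      obtain ⟨r, hrlt, rfl⟩ : ∃ r, r < γ.length ∧ i = k * γ.length + r :=
        ⟨i - k * γ.length, by omega, by omega⟩
      rw [List.getElem?_append_right (by rw [List.length_reverse, length_gpow]; omega)]
      have h1 : k * γ.length + r - (gpow γ k).reverse.length = r := by
        rw [List.length_reverse, length_gpow]; omega
      have h2 : (k * γ.length + r) % γ.length = r := by
        rw [Nat.mul_comm, Nat.mul_add_mod, Nat.mod_eq_of_lt hrlt]
      rw [h1]
      show _ = γ.reverse[(k * γ.length + r) % γ.length]?
      rw [h2]

lemma lex_of_get : ∀ (x y : List Sig) (j : ℕ),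
    (∀ i, i < j → x[i]? = y[i]?) →
    ((x[j]? = none ∧ y[j]? ≠ none) ∨
      ∃ a b, x[j]? = some a ∧ y[j]? = some b ∧ a < b) →
    List.Lex (· < ·) x y := by
  intro x
  induction x with
  | nil =>
    intro y j _ h2
    cases y with
    | nil => simp at h2
    | cons c ys => exact List.Lex.nil
  | cons a xs ih =>
    intro y j h1 h2
    cases y with
    | nil => simp at h2
    | cons b ys =>
      cases j with
      | zero =>
        rcases h2 with ⟨h, _⟩ | ⟨a', b', ha, hb, hab⟩
        · simp at h
        · simp only [List.getElem?_cons_zero, Option.some.injEq] at ha hb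
          subst ha; subst hb
          exact List.Lex.rel hab
      | succ j =>
        have hab : a = b := by simpa using h1 0 (Nat.succ_pos _)
        subst hab
        refine List.Lex.cons (ih ys j (fun i hi => by simpa using h1 (i + 1) (by omega)) ?_)
        simpa using h2

lemma lex_append_left (z : List Sig) {x y : List Sig} (h : List.Lex (· < ·) x y) :
    List.Lex (· < ·) (z ++ x) (z ++ y) := by
  induction z with
  | nil => simpa
  | cons c z ih => exact List.Lex.cons ih

lemma toCStr_lt_or_gt (γ : List Sig) (hγ : γ ≠ []) (α : List Sig) :
    cstrLt (toCStr α) (omegaCStr γ) ∨ cstrLt (omegaCStr γ) (toCStr α) := by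
  classical
  have hne : ∃ j, toCStr α j ≠ omegaCStr γ j := by
    refine ⟨α.length, ?_⟩
    obtain ⟨c, hc⟩ := omega_some γ hγ α.length
    have h0 : toCStr α α.length = none := List.getElem?_eq_none_iff.mpr (by simp)
    rw [h0, hc]; simp
  have hj := Nat.find_spec hne
  have hagree : ∀ i, i < Nat.find hne → toCStr α i = omegaCStr γ i :=
    fun i hi => not_not.mp (Nat.find_min hne hi)
  obtain ⟨c, hc⟩ := omega_some γ hγ (Nat.find hne)
  cases hx : toCStr α (Nat.find hne) with
  | none => exact Or.inl ⟨_, hagree, Or.inl ⟨hx, by rw [hc]; simp⟩⟩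
  | some a =>
    rcases lt_trichotomy a c with h | h | h
    · exact Or.inl ⟨_, hagree, Or.inr ⟨a, c, hx, hc, h⟩⟩
    · exact absurd (by rw [hx, hc, h]) hj
    · exact Or.inr ⟨_, fun i hi => (hagree i hi).symm, Or.inr ⟨c, a, hc, hx, h⟩⟩

lemma lex_lt_side {γ : List Sig} (hγ : γ ≠ []) {α : List Sig}
    (h : cstrLt (toCStr α) (omegaCStr γ)) (n : ℕ) (hn : α.length < n * γ.length)
    (β : List Sig) :
    List.Lex (· < ·) α.reverse ((gpow γ n).reverse ++ β) := by
  obtain ⟨j, hagree, hcase⟩ := h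
  have hjle : j ≤ α.length := by
    by_contra hj
    have h1 := hagree α.length (by omega)
    obtain ⟨c, hc⟩ := omega_some γ hγ α.length
    have h0 : toCStr α α.length = none := List.getElem?_eq_none_iff.mpr (by simp)
    rw [h0, hc] at h1; cases h1
  have hjlt : j < n * γ.length := by omega
  have hw : ∀ i, i ≤ j → ((gpow γ n).reverse ++ β)[i]? = omegaCStr γ i := fun i hi => by
    rw [List.getElem?_append_left (by rw [List.length_reverse, length_gpow]; omega),
        get?_reverse_gpow γ n i (by omega)]
  apply lex_of_get α.reverse _ j
  · intro i hi
    rw [hw i (le_of_lt hi)]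
    exact hagree i hi
  · rcases hcase with ⟨h1, _⟩ | ⟨a, b, h1, h2, h3⟩
    · refine Or.inl ⟨h1, ?_⟩
      rw [hw j le_rfl]
      obtain ⟨c, hc⟩ := omega_some γ hγ j
      rw [hc]; simp
    · exact Or.inr ⟨a, b, h1, by rw [hw j le_rfl]; exact h2, h3⟩

lemma lex_gt_side {γ : List Sig} (hγ : γ ≠ []) {α : List Sig}
    (h : cstrLt (omegaCStr γ) (toCStr α)) (n : ℕ) (hn : α.length < n * γ.length)
    (β : List Sig) :
    List.Lex (· < ·) ((gpow γ n).reverse ++ β) α.reverse := by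
  obtain ⟨j, hagree, hcase⟩ := h
  rcases hcase with ⟨h1, _⟩ | ⟨a, b, h1, h2, h3⟩
  · obtain ⟨c, hc⟩ := omega_some γ hγ j
    rw [hc] at h1; cases h1
  · have hjlt : j < α.length := by
      by_contra hj
      have h0 : toCStr α j = none := List.getElem?_eq_none_iff.mpr (by simp; omega)
      rw [h0] at h2; cases h2
    have hjlt' : j < n * γ.length := by omega
    have hw : ∀ i, i ≤ j → ((gpow γ n).reverse ++ β)[i]? = omegaCStr γ i := fun i hi => by
      rw [List.getElem?_append_left (by rw [List.length_reverse, length_gpow]; omega),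
          get?_reverse_gpow γ n i (by omega)]
    apply lex_of_get _ α.reverse j
    · intro i hi
      rw [hw i (le_of_lt hi)]
      exact hagree i hi
    · exact Or.inr ⟨a, b, by rw [hw j le_rfl]; exact h1, h2, h3⟩

lemma entangled_aux [DecidableEq Q] (δ : Q → Sig → Q) (s : Q) (γ : List Sig) (hγ : γ ≠ [])
    {m : ℕ} (u : Fin m → Q)
    (hcyc : ∀ i, deltaStar δ (u i) γ = u i)
    (α : Fin m → List Sig) (hα : ∀ i, deltaStar δ s (α i) = u i)
    (T : Finset (Fin m)) (hT : 0 < T.card)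
    (hside : (∀ i ∈ T, cstrLt (toCStr (α i)) (omegaCStr γ)) ∨
             (∀ i ∈ T, cstrLt (omegaCStr γ) (toCStr (α i)))) :
    Entangled δ s ↑(T.image u) := by
  classical
  let e := T.equivFin
  let σ : ℕ → Fin m := fun t => ((e.symm ⟨t % T.card, Nat.mod_lt _ hT⟩ : T) : Fin m)
  have hσmem : ∀ t, σ t ∈ T := fun t => (e.symm _).2
  set N : ℕ := (Finset.univ.sup fun i : Fin m => (α i).length) + 1 with hNdef
  have hN : ∀ i : Fin m, (α i).length < N :=
    fun i => Nat.lt_succ_of_le (Finset.le_sup (f := fun i : Fin m => (α i).length) (Finset.mem_univ i))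
  set a : ℕ → List Sig := fun t => α (σ t) ++ gpow γ (N * t) with hadef
  have hγlen : 0 < γ.length := List.length_pos_iff.mpr hγ
  have hlen : ∀ (i : Fin m) (d : ℕ), 0 < d → (α i).length < N * d * γ.length := by
    intro i d hd
    calc (α i).length < N := hN i
    _ ≤ N * d := Nat.le_mul_of_pos_right N hd
    _ ≤ N * d * γ.length := Nat.le_mul_of_pos_right _ hγlen
  have hrev1 : ∀ t, (a t).reverse = (gpow γ (N * t)).reverse ++ (α (σ t)).reverse := by
    intro t; rw [hadef]; simp [List.reverse_append]
  have hrev : ∀ t d, (a (t + d)).reverse =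
      (gpow γ (N * t)).reverse ++ ((gpow γ (N * d)).reverse ++ (α (σ (t + d))).reverse) := by
    intro t d
    rw [hrev1 (t + d), show N * (t + d) = N * d + N * t by ring, gpow_add,
        List.reverse_append, List.append_assoc]
  have hhit : ∀ u' ∈ (↑(T.image u) : Set Q), ∀ t, ∃ t', t ≤ t' ∧ deltaStar δ s (a t') = u' := by
    intro u' hu' t
    obtain ⟨i, hiT, rfl⟩ := Finset.mem_image.mp (Finset.mem_coe.mp hu')
    set r := e ⟨i, hiT⟩ with hrdef
    refine ⟨T.card * t + ↑r, ?_, ?_⟩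
    · have := Nat.le_mul_of_pos_left t hT
      omega
    · have hσ : σ (T.card * t + ↑r) = i := by
        have hmod : (T.card * t + ↑r) % T.card = ↑r := by
          rw [Nat.mul_add_mod]; exact Nat.mod_eq_of_lt r.2
        have h1 : (⟨(T.card * t + ↑r) % T.card, Nat.mod_lt _ hT⟩ : Fin T.card) = r :=
          Fin.ext hmod
        show ((e.symm ⟨(T.card * t + ↑r) % T.card, Nat.mod_lt _ hT⟩ : T) : Fin m) = i
        rw [h1, hrdef, Equiv.symm_apply_apply]
      rw [hadef]
      show deltaStar δ s (α (σ (T.card * t + ↑r)) ++ gpow γ (N * (T.card * t + ↑r))) = u i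
      rw [hσ, deltaStar_append, hα i, deltaStar_gpow δ (u i) γ (hcyc i)]
  rcases hside with hs | hs
  · refine ⟨a, Or.inl ?_, hhit⟩
    intro t t' htt
    rcases eq_or_lt_of_le htt with rfl | hlt
    · exact Or.inl rfl
    · refine Or.inr ?_
      obtain ⟨d, hd, rfl⟩ : ∃ d, 0 < d ∧ t' = t + d := ⟨t' - t, by omega, by omega⟩
      show List.Lex (· < ·) (a t).reverse (a (t + d)).reverse
      rw [hrev t d, hrev1 t]
      exact lex_append_left _ (lex_lt_side hγ (hs _ (hσmem t)) (N * d) (hlen _ d hd) _)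
  · refine ⟨a, Or.inr ?_, hhit⟩
    intro t t' htt
    rcases eq_or_lt_of_le htt with rfl | hlt
    · exact Or.inl rfl
    · refine Or.inr ?_
      obtain ⟨d, hd, rfl⟩ : ∃ d, 0 < d ∧ t' = t + d := ⟨t' - t, by omega, by omega⟩
      show List.Lex (· < ·) (a (t + d)).reverse (a t).reverse
      rw [hrev t d, hrev1 t]
      exact lex_append_left _ (lex_gt_side hγ (hs _ (hσmem t)) (N * d) (hlen _ d hd) _)

end AuxLemmas

/-- Sufficiency of `2p` equally-labeled cycles: if the minimal DFA of `L` (with all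
states reachable) contains `2p` pairwise distinct states each carrying a cycle
labeled by the same nonempty string `γ`, and `width^D(L) = ent(A_min)`, then
`width^D(L) ≥ p`. Here `ent` is characterized as the greatest cardinality of an
entangled set of states. -/
theorem stmt_13 {Q Sig : Type*} [Fintype Q] [LinearOrder Sig]
    (δ : Q → Sig → Q) (s : Q) (widthD ent : ℕ)
    (hacc : ∀ u : Q, ∃ a, deltaStar δ s a = u)
    (hent : IsGreatest {k | ∃ S : Finset Q, S.card = k ∧ Entangled δ s ↑S} ent)
    (hwd : widthD = ent)
    (p : ℕ) (γ : List Sig) (hγ : γ ≠ [])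
    (u : Fin (2 * p) → Q) (hinj : Function.Injective u)
    (hcyc : ∀ i, deltaStar δ (u i) γ = u i) :
    p ≤ widthD := by
  classical
  rcases Nat.eq_zero_or_pos p with rfl | hp
  · exact Nat.zero_le _
  choose A hA using hacc
  set α : Fin (2 * p) → List Sig := fun i => A (u i) with hαdef
  have hα : ∀ i, deltaStar δ s (α i) = u i := fun i => hA (u i)
  set T : Finset (Fin (2 * p)) :=
    Finset.univ.filter (fun i => cstrLt (toCStr (α i)) (omegaCStr γ)) with hTdef
  have hsplit : p ≤ T.card ∨ p ≤ Tᶜ.card := by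
    have h1 : T.card + Tᶜ.card = 2 * p := by
      rw [Finset.card_add_card_compl]; simp
    omega
  have key : ∃ S : Finset Q, S.card = p ∧ Entangled δ s ↑S := by
    rcases hsplit with h | h
    · obtain ⟨T', hsub, hcard⟩ := Finset.exists_subset_card_eq h
      refine ⟨T'.image u, ?_, ?_⟩
      · rw [Finset.card_image_of_injective _ hinj, hcard]
      · refine entangled_aux δ s γ hγ u hcyc α hα T' (by omega) (Or.inl ?_)
        intro i hi
        have := hsub hi
        rw [hTdef, Finset.mem_filter] at this
        exact this.2
    · obtain ⟨T', hsub, hcard⟩ := Finset.exists_subset_card_eq h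
      refine ⟨T'.image u, ?_, ?_⟩
      · rw [Finset.card_image_of_injective _ hinj, hcard]
      · refine entangled_aux δ s γ hγ u hcyc α hα T' (by omega) (Or.inr ?_)
        intro i hi
        have h2 := Finset.mem_compl.mp (hsub hi)
        rw [hTdef, Finset.mem_filter] at h2
        have h3 : ¬ cstrLt (toCStr (α i)) (omegaCStr γ) := fun hc =>
          h2 ⟨Finset.mem_univ i, hc⟩
        exact (toCStr_lt_or_gt γ hγ (α i)).resolve_left h3
  obtain ⟨S, hS, hE⟩ := key
  have hle : p ≤ ent := hent.2 ⟨S, hS, hE⟩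
  omega
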